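/- For every positive integer n, ∫₀^{ϖ/2} sl^{4n}(t) dt = [∏_{j=1}^{n} (4j−3)/(4j−1)] · ϖ/2, i.e. ∫₀^{ϖ/2} sl^{4n}(t) dt = (1/3)·(5/7)·(9/11)·⋯·((4n−3)/(4n−1))·ϖ/2. -/

import Mathlib

open Set MeasureTheory Filter

/-- Generalized arcsine: `arcsin_{p,q}(x) = ∫₀ˣ (1 - tᵠ)^(-1/p) dt`. -/
noncomputable def gArcsin (p q x : ℝ) : ℝ := ∫ t in (0:ℝ)..x, (1 - t ^ q) ^ (-(1 / p))

/-- Generalized pi: `π_{p,q} = 2 ∫₀¹ (1 - tᵠ)^(-1/p) dt`. -/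
noncomputable def gPi (p q : ℝ) : ℝ := 2 * gArcsin p q 1

/-- `S` is the generalized sine `sin_{p,q}` (the inverse of `gArcsin p q` on `[0,1]`). -/
def IsGSin (p q : ℝ) (S : ℝ → ℝ) : Prop :=
  ∀ y ∈ Icc (0:ℝ) 1, S (gArcsin p q y) = y

/-- `C` is the generalized cosine `cos_{p,q}`, the derivative of `S = sin_{p,q}`
on `[0, π_{p,q}/2]`. -/
def IsGCos (p q : ℝ) (S C : ℝ → ℝ) : Prop :=
  ∀ x ∈ Icc (0:ℝ) (gPi p q / 2), HasDerivWithinAt S (C x) (Icc (0:ℝ) (gPi p q / 2)) x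

/- ### Auxiliary development -/

noncomputable def lg0 : ℝ → ℝ := fun t => (1 - t ^ (4:ℕ)) ^ (-(1/2) : ℝ)

lemma lg0_meas : Measurable lg0 :=
  (measurable_const.sub (measurable_id.pow_const 4)).pow measurable_const

lemma gArcsin_eq (x : ℝ) : gArcsin 2 4 x = ∫ t in (0:ℝ)..x, lg0 t := by
  unfold gArcsin lg0
  congr 1
  funext t
  rw [show (4:ℝ) = ((4:ℕ):ℝ) by norm_num, Real.rpow_natCast]

lemma lg0_int : IntervalIntegrable lg0 volume 0 1 := by
  have h1 : IntervalIntegrable (fun x : ℝ => x ^ (-(1/2) : ℝ)) volume 0 1 :=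
    intervalIntegral.intervalIntegrable_rpow' (by norm_num)
  have h2 : IntervalIntegrable (fun t : ℝ => (1 - t) ^ (-(1/2) : ℝ)) volume 0 1 := by
    exact (by simpa using h1.comp_sub_left 1 : IntervalIntegrable _ volume 1 0).symm
  refine h2.mono_fun lg0_meas.aestronglyMeasurable ?_
  rw [uIoc_of_le (by norm_num : (0:ℝ) ≤ 1)]
  filter_upwards [ae_restrict_mem measurableSet_Ioc] with x hx
  obtain ⟨hx0, hx1⟩ := hx
  have hx4 : x ^ 4 ≤ 1 := pow_le_one₀ hx0.le hx1
  have hx3 : x ^ 3 ≤ 1 := pow_le_one₀ hx0.le hx1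
  have hb : (0:ℝ) ≤ 1 - x ^ 4 := by linarith
  have hb' : (0:ℝ) ≤ 1 - x := by linarith
  simp only [lg0, Real.norm_eq_abs, abs_of_nonneg (Real.rpow_nonneg hb _),
    abs_of_nonneg (Real.rpow_nonneg hb' _)]
  rcases eq_or_lt_of_le hx1 with h | h
  · subst h
    norm_num [Real.zero_rpow (by norm_num : (-(1/2):ℝ) ≠ 0)]
  · exact Real.rpow_le_rpow_of_nonpos (by linarith) (by nlinarith) (by norm_num)

lemma lg0_nonneg {t : ℝ} (h0 : 0 ≤ t) (h1 : t ≤ 1) : 0 ≤ lg0 t :=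
  Real.rpow_nonneg (by nlinarith [pow_le_one₀ h0 h1 (n := 4)]) _

lemma lg0_pos {t : ℝ} (h0 : 0 ≤ t) (h1 : t < 1) : 0 < lg0 t := by
  have : t ^ 4 < 1 := pow_lt_one₀ h0 h1 (by norm_num)
  exact Real.rpow_pos_of_pos (by linarith) _

lemma intJ (k : ℕ) : IntervalIntegrable (fun t => t ^ k * lg0 t) volume 0 1 := by
  refine lg0_int.mono_fun ((measurable_id.pow_const k).mul lg0_meas).aestronglyMeasurable ?_
  rw [uIoc_of_le (by norm_num : (0:ℝ) ≤ 1)]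
  filter_upwards [ae_restrict_mem measurableSet_Ioc] with x hx
  obtain ⟨hx0, hx1⟩ := hx
  have h1 : (0:ℝ) ≤ lg0 x := lg0_nonneg hx0.le hx1
  have h2 : x ^ k ≤ 1 := pow_le_one₀ hx0.le hx1
  have h3 : (0:ℝ) ≤ x ^ k := pow_nonneg hx0.le k
  simp only [Real.norm_eq_abs, abs_of_nonneg h1, abs_of_nonneg (mul_nonneg h3 h1)]
  nlinarith

lemma lg0_contAt {x : ℝ} (hx : x ∈ Ioo (0:ℝ) 1) : ContinuousAt lg0 x := by
  have hb : (0:ℝ) < 1 - x ^ 4 := by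
    have : x ^ 4 < 1 := pow_lt_one₀ hx.1.le hx.2 (by norm_num)
    linarith
  exact (continuousAt_const.sub (continuousAt_pow x 4)).rpow_const (Or.inl hb.ne')

lemma hasDeriv {x : ℝ} (hx : x ∈ Ioo (0:ℝ) 1) : HasDerivAt (gArcsin 2 4) (lg0 x) x := by
  have hfun : gArcsin 2 4 = fun u => ∫ t in (0:ℝ)..u, lg0 t := funext gArcsin_eq
  rw [hfun]
  refine intervalIntegral.integral_hasDerivAt_right
    (lg0_int.mono_set ?_) ⟨univ, univ_mem, lg0_meas.aestronglyMeasurable.restrict⟩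
    (lg0_contAt hx)
  rw [uIcc_of_le hx.1.le, uIcc_of_le (by norm_num : (0:ℝ) ≤ 1)]
  exact Icc_subset_Icc le_rfl hx.2.le

lemma gArcsin_cont : ContinuousOn (gArcsin 2 4) (Icc 0 1) := by
  have hfun : gArcsin 2 4 = fun u => ∫ t in (0:ℝ)..u, lg0 t := funext gArcsin_eq
  rw [hfun, ← uIcc_of_le (by norm_num : (0:ℝ) ≤ 1)]
  exact intervalIntegral.continuousOn_primitive_interval
    (by rw [uIcc_of_le (by norm_num : (0:ℝ) ≤ 1)] at *; exact
        ((intervalIntegrable_iff' (f := lg0) (μ := volume) (a := 0) (b := 1) enorm_ne_top).mp lg0_int).mono_set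
          (by rw [uIcc_of_le (by norm_num : (0:ℝ) ≤ 1)]))

lemma gArcsin_smono : StrictMonoOn (gArcsin 2 4) (Icc 0 1) := by
  intro x hx y hy hxy
  have hix : IntervalIntegrable lg0 volume 0 x := lg0_int.mono_set (by
    rw [uIcc_of_le hx.1, uIcc_of_le (by norm_num : (0:ℝ) ≤ 1)]
    exact Icc_subset_Icc le_rfl hx.2)
  have hiy : IntervalIntegrable lg0 volume 0 y := lg0_int.mono_set (by
    rw [uIcc_of_le hy.1, uIcc_of_le (by norm_num : (0:ℝ) ≤ 1)]
    exact Icc_subset_Icc le_rfl hy.2)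
  have hixy : IntervalIntegrable lg0 volume x y := lg0_int.mono_set (by
    rw [uIcc_of_le hxy.le, uIcc_of_le (by norm_num : (0:ℝ) ≤ 1)]
    exact Icc_subset_Icc hx.1 hy.2)
  have hsub : gArcsin 2 4 y - gArcsin 2 4 x = ∫ t in x..y, lg0 t := by
    rw [gArcsin_eq, gArcsin_eq]
    exact intervalIntegral.integral_interval_sub_left hiy hix
  have hpos : 0 < ∫ t in x..y, lg0 t := by
    refine intervalIntegral.intervalIntegral_pos_of_pos_on hixy (fun t ht => ?_) hxy
    exact lg0_pos (le_trans hx.1 ht.1.le) (lt_of_lt_of_le ht.2 hy.2)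
  linarith

lemma gArcsin_zero : gArcsin 2 4 0 = 0 := by rw [gArcsin_eq]; simp

lemma gArcsin_image : gArcsin 2 4 '' Ioo 0 1 = Ioo 0 (gArcsin 2 4 1) := by
  apply Subset.antisymm
  · rintro _ ⟨x, hx, rfl⟩
    have h0 : (0:ℝ) ∈ Icc (0:ℝ) 1 := by norm_num
    have h1 : (1:ℝ) ∈ Icc (0:ℝ) 1 := by norm_num
    have hxm : x ∈ Icc (0:ℝ) 1 := Ioo_subset_Icc_self hx
    constructor
    · have := gArcsin_smono h0 hxm hx.1
      rwa [gArcsin_zero] at this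
    · exact gArcsin_smono hxm h1 hx.2
  · have := intermediate_value_Ioo (by norm_num : (0:ℝ) ≤ 1) gArcsin_cont
    rwa [gArcsin_zero] at this

lemma gArcsin_one_pos : 0 < gArcsin 2 4 1 := by
  have := gArcsin_smono (by norm_num : (0:ℝ) ∈ Icc (0:ℝ) 1)
    (by norm_num : (1:ℝ) ∈ Icc (0:ℝ) 1) one_pos
  rwa [gArcsin_zero] at this

lemma subst (S : ℝ → ℝ) (hS : IsGSin 2 4 S) (m : ℕ) :
    ∫ t in (0:ℝ)..(gPi 2 4 / 2), S t ^ m = ∫ y in (0:ℝ)..1, y ^ m * lg0 y := by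
  have hpi : gPi 2 4 / 2 = gArcsin 2 4 1 := by rw [gPi]; ring
  rw [hpi, intervalIntegral.integral_of_le gArcsin_one_pos.le,
    intervalIntegral.integral_of_le (by norm_num : (0:ℝ) ≤ 1),
    integral_Ioc_eq_integral_Ioo, integral_Ioc_eq_integral_Ioo, ← gArcsin_image]
  rw [integral_image_eq_integral_abs_deriv_smul measurableSet_Ioo
    (fun x hx => (hasDeriv hx).hasDerivWithinAt)
    (gArcsin_smono.injOn.mono Ioo_subset_Icc_self) (fun t => S t ^ m)]
  refine setIntegral_congr_fun measurableSet_Ioo (fun y hy => ?_)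
  have h1 : S (gArcsin 2 4 y) = y := hS y (Ioo_subset_Icc_self hy)
  rw [smul_eq_mul, h1, abs_of_nonneg (lg0_nonneg hy.1.le hy.2.le), mul_comm]

noncomputable def J (k : ℕ) : ℝ := ∫ y in (0:ℝ)..1, y ^ k * lg0 y

lemma recJ (m : ℕ) : (4*(m:ℝ)+3) * J (4*m+4) = (4*(m:ℝ)+1) * J (4*m) := by
  set F : ℝ → ℝ := fun y => y ^ (4*m+1) * (1 - y ^ 4) ^ ((1:ℝ)/2) with hF
  set φ : ℝ → ℝ := fun y =>
    (4*(m:ℝ)+1) * (y ^ (4*m) * lg0 y) - (4*(m:ℝ)+3) * (y ^ (4*m+4) * lg0 y) with hφ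
  have hcont : ContinuousOn F (Icc 0 1) := by
    apply ContinuousOn.mul (continuousOn_pow _)
    exact ((continuous_const.sub (continuous_pow 4)).rpow_const
      (fun x => Or.inr (by norm_num))).continuousOn
  have hderiv : ∀ x ∈ Ioo (0:ℝ) 1, HasDerivAt F (φ x) x := by
    intro x hx
    have hb : (0:ℝ) < 1 - x ^ 4 := by
      have : x ^ 4 < 1 := pow_lt_one₀ hx.1.le hx.2 (by norm_num)
      linarith
    have h1 : HasDerivAt (fun y : ℝ => y ^ (4*m+1)) ((4*(m:ℝ)+1) * x ^ (4*m)) x := by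
      have h := hasDerivAt_pow (4*m+1) x
      rw [show 4*m+1-1 = 4*m from by omega] at h
      push_cast at h
      exact h
    have hinner : HasDerivAt (fun y : ℝ => 1 - y ^ 4) (-(4 * x ^ 3)) x := by
      simpa using (hasDerivAt_pow 4 x).const_sub 1
    have houter : HasDerivAt (fun z : ℝ => z ^ ((1:ℝ)/2))
        (((1:ℝ)/2) * (1 - x ^ 4) ^ ((1:ℝ)/2 - 1)) (1 - x ^ 4) :=
      Real.hasDerivAt_rpow_const (Or.inl hb.ne')
    have h2 : HasDerivAt (fun y : ℝ => (1 - y ^ 4) ^ ((1:ℝ)/2))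
        ((((1:ℝ)/2) * (1 - x ^ 4) ^ ((1:ℝ)/2 - 1)) * (-(4 * x ^ 3))) x :=
      by have h := houter.comp x hinner; exact h
    have h3 := h1.mul h2
    convert h3 using 1
    case e'_4 => rfl
    case e'_5 => rfl
    case e'_8 => rfl
    have e1 : ((1:ℝ)/2 - 1) = -(1/2) := by norm_num
    have e2 : (1 - x ^ 4) ^ ((1:ℝ)/2) = (1 - x ^ 4) * lg0 x := by
      rw [show ((1:ℝ)/2) = 1 + -(1/2) by norm_num, Real.rpow_add hb, Real.rpow_one]
      rfl
    rw [hφ, e1, e2]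
    show (4*(m:ℝ)+1) * (x ^ (4*m) * lg0 x) - (4*(m:ℝ)+3) * (x ^ (4*m+4) * lg0 x)
      = (4*(m:ℝ)+1) * x ^ (4*m) * ((1 - x ^ 4) * lg0 x)
        + x ^ (4*m+1) * (((1:ℝ)/2 * (1 - x ^ 4) ^ (-(1/2):ℝ)) * (-(4 * x ^ 3)))
    have e3 : (1 - x ^ 4) ^ (-(1/2):ℝ) = lg0 x := rfl
    rw [e3]
    ring
  have hint : IntervalIntegrable φ volume 0 1 :=
    ((intJ (4*m)).const_mul _).sub ((intJ (4*m+4)).const_mul _)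
  have hftc := intervalIntegral.integral_eq_sub_of_hasDerivAt_of_le
    (by norm_num : (0:ℝ) ≤ 1) hcont hderiv hint
  have hF1 : F 1 = 0 := by
    simp [hF, Real.zero_rpow (by norm_num : ((1:ℝ)/2) ≠ 0)]
  have hF0 : F 0 = 0 := by simp [hF]
  rw [hF1, hF0, sub_zero] at hftc
  have hsplit : ∫ y in (0:ℝ)..1, φ y
      = (4*(m:ℝ)+1) * J (4*m) - (4*(m:ℝ)+3) * J (4*m+4) := by
    rw [hφ]
    rw [intervalIntegral.integral_sub ((intJ (4*m)).const_mul _) ((intJ (4*m+4)).const_mul _),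
      intervalIntegral.integral_const_mul, intervalIntegral.integral_const_mul]
    rfl
  rw [hsplit] at hftc
  linarith

lemma J_formula (n : ℕ) :
    J (4*n) = (∏ j ∈ Finset.Icc 1 n, ((4 * (j : ℝ) - 3) / (4 * (j : ℝ) - 1))) * J 0 := by
  induction n with
  | zero => simp
  | succ n ih =>
    have h3 : (4*(n:ℝ)+3) ≠ 0 := by positivity
    have hstep : J (4*(n+1)) = ((4*(n:ℝ)+1) / (4*(n:ℝ)+3)) * J (4*n) := by
      have := recJ n
      rw [show 4*(n+1) = 4*n+4 from by omega]
      field_simp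
      linarith
    rw [hstep, ih, Finset.prod_Icc_succ_top (by omega : 1 ≤ n + 1)]
    push_cast
    ring

lemma J_zero : J 0 = gPi 2 4 / 2 := by
  have : J 0 = gArcsin 2 4 1 := by
    rw [J, gArcsin_eq]
    congr 1
    funext y
    simp
  rw [this, gPi]
  ring

/-- Wallis-type formula for the lemniscate sine: for `n ≥ 1`,
`∫₀^{ϖ/2} sl^{4n} t dt = (1/3)(5/7)(9/11)⋯((4n-3)/(4n-1)) · ϖ/2`. -/
theorem stmt_14 (S : ℝ → ℝ) (hS : IsGSin 2 4 S) (n : ℕ) (hn : 1 ≤ n) :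
    ∫ t in (0:ℝ)..(gPi 2 4 / 2), S t ^ (4 * n) =
      (∏ j ∈ Finset.Icc 1 n, ((4 * (j : ℝ) - 3) / (4 * (j : ℝ) - 1))) * (gPi 2 4 / 2) := by
  rw [subst S hS (4*n), show (∫ y in (0:ℝ)..1, y ^ (4*n) * lg0 y) = J (4*n) from rfl,
    J_formula n, J_zero]
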